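/- Let μ, r_0, R > 0 with r_h := (16μ r_0 R²)^{1/3} < r_0 and let v be the explicit minimizer as above with σ(r) = v'(r) + r²/(2R²). Then v satisfies the Euler–Lagrange equation (2 σ(r) r)' = W_rel'(v(r)/r) for all r ∈ (0, r_0) \ {r_h}, where W_rel'(η) = 2η if η ≥ -2μ and W_rel'(η) = -4μ if η ≤ -2μ. -/

import Mathlib

/-- the explicit minimizer satisfies the Euler–Lagrange equation
`(2σ(r)r)' = W_rel'(v(r)/r)` on `(0, r₀) \ {r_h}`. -/
theorem explicit_minimizer_EulerLagrange (μ r0 R : ℝ) (hμ : 0 < μ) (hr0 : 0 < r0) (hR : 0 < R)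
    (rh : ℝ) (hrh : rh = (16 * μ * r0 * R ^ 2) ^ ((1:ℝ)/3)) (hlt : rh < r0)
    (v : ℝ → ℝ)
    (hv : ∀ r : ℝ, v r =
      if r ≤ rh then
        -(3/16) * r ^ 3 / R ^ 2 + (2 * μ * (r0 / rh - 1) + rh ^ 2 / (16 * R ^ 2)) * r
      else
        -2 * μ * r - (r ^ 3 - rh ^ 3) / (6 * R ^ 2) + 2 * μ * r0 * Real.log (r / rh))
    (Wrel' : ℝ → ℝ)
    (hW' : ∀ η : ℝ, Wrel' η = if -2 * μ ≤ η then 2 * η else -4 * μ) :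
    ∀ r ∈ Set.Ioo (0:ℝ) r0, r ≠ rh →
      deriv (fun s : ℝ => 2 * (deriv v s + s ^ 2 / (2 * R ^ 2)) * s) r
        = Wrel' (v r / r) := by
  have hx : (0:ℝ) < 16 * μ * r0 * R ^ 2 := by positivity
  have hrh0 : 0 < rh := by
    rw [hrh]; exact Real.rpow_pos_of_pos hx _
  have hkey : rh ^ 3 = 16 * μ * r0 * R ^ 2 := by
    rw [hrh, ← Real.rpow_natCast ((16 * μ * r0 * R ^ 2) ^ ((1:ℝ)/3)) 3,
      ← Real.rpow_mul hx.le]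
    norm_num
  have hr0eq : r0 = rh ^ 3 / (16 * μ * R ^ 2) := by
    field_simp
    linarith [hkey]
  set Cc : ℝ := 2 * μ * (r0 / rh - 1) + rh ^ 2 / (16 * R ^ 2) with hCc
  intro r hr hne
  obtain ⟨hr0', hrr0⟩ := hr
  rcases lt_or_gt_of_ne hne with hlt' | hgt
  · -- r < rh : elastic region
    -- v equals the cubic on a neighborhood
    have hg : ∀ s ∈ Set.Iio rh, v s = -(3/16) * s ^ 3 / R ^ 2 + Cc * s := by
      intro s hs
      rw [hv s, if_pos (le_of_lt hs)]
    -- derivative of v on Iio rh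
    have hdv : ∀ s ∈ Set.Iio rh, deriv v s = -(9/16) * s ^ 2 / R ^ 2 + Cc := by
      intro s hs
      have hev : v =ᶠ[nhds s] fun t => -(3/16) * t ^ 3 / R ^ 2 + Cc * t :=
        Filter.eventuallyEq_of_mem (isOpen_Iio.mem_nhds hs) hg
      rw [hev.deriv_eq]
      have h1 : HasDerivAt (fun t : ℝ => -(3/16) * t ^ 3 / R ^ 2 + Cc * t)
          (-(9/16) * s ^ 2 / R ^ 2 + Cc) s := by
        have hp : HasDerivAt (fun t : ℝ => -(3/16) * t ^ 3 / R ^ 2)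
            (-(3/16) * (3 * s ^ 2) / R ^ 2) s := by
          simpa using (((hasDerivAt_pow 3 s).const_mul (-(3/16) : ℝ)).div_const (R ^ 2))
        have hl : HasDerivAt (fun t : ℝ => Cc * t) Cc s := by
          simpa using (hasDerivAt_id s).const_mul Cc
        exact (hp.add hl).congr_deriv (by ring)
      exact h1.deriv
    -- the function 2σ(s)s equals an explicit cubic near r
    have hf : (fun s : ℝ => 2 * (deriv v s + s ^ 2 / (2 * R ^ 2)) * s)
        =ᶠ[nhds r] fun s => -(1/8) * s ^ 3 / R ^ 2 + 2 * Cc * s := by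
      refine Filter.eventuallyEq_of_mem (isOpen_Iio.mem_nhds hlt') ?_
      intro s hs
      dsimp only
      rw [hdv s hs]
      field_simp
      ring
    rw [hf.deriv_eq]
    have hD : HasDerivAt (fun s : ℝ => -(1/8) * s ^ 3 / R ^ 2 + 2 * Cc * s)
        (-(3/8) * r ^ 2 / R ^ 2 + 2 * Cc) r := by
      have hp : HasDerivAt (fun t : ℝ => -(1/8) * t ^ 3 / R ^ 2)
          (-(1/8) * (3 * r ^ 2) / R ^ 2) r := by
        simpa using (((hasDerivAt_pow 3 r).const_mul (-(1/8) : ℝ)).div_const (R ^ 2))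
      have hl : HasDerivAt (fun t : ℝ => 2 * Cc * t) (2 * Cc) r := by
        simpa using (hasDerivAt_id r).const_mul (2 * Cc)
      exact (hp.add hl).congr_deriv (by ring)
    rw [hD.deriv]
    -- right hand side
    have hvr : v r / r = -(3/16) * r ^ 2 / R ^ 2 + Cc := by
      rw [hg r hlt']
      field_simp
    have hetage : -2 * μ ≤ v r / r := by
      rw [hvr, hCc]
      have hq : r0 / rh = rh ^ 2 / (16 * μ * R ^ 2) := by
        rw [hr0eq]; field_simp
      rw [hq]
      have h2 : 2 * μ * (rh ^ 2 / (16 * μ * R ^ 2) - 1) = rh ^ 2 / (8 * R ^ 2) - 2 * μ := by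
        field_simp; ring
      rw [h2]
      have h1 : r ^ 2 ≤ rh ^ 2 := by nlinarith
      have h5 : -(3/16) * r ^ 2 / R ^ 2 + (rh ^ 2 / (8 * R ^ 2) - 2 * μ + rh ^ 2 / (16 * R ^ 2))
          - (-2 * μ) = 3 * (rh ^ 2 - r ^ 2) / (16 * R ^ 2) := by
        field_simp; ring
      have h6 : 0 ≤ 3 * (rh ^ 2 - r ^ 2) / (16 * R ^ 2) :=
        div_nonneg (by linarith) (by positivity)
      linarith
    rw [hW' (v r / r), if_pos hetage, hvr]
    ring
  · -- r > rh : plastic region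
    have hg : ∀ s ∈ Set.Ioi rh, v s =
        -2 * μ * s - (s ^ 3 - rh ^ 3) / (6 * R ^ 2) + 2 * μ * r0 * Real.log (s / rh) := by
      intro s hs
      rw [hv s, if_neg (not_le.2 hs)]
    have hdv : ∀ s ∈ Set.Ioi rh, deriv v s = -2 * μ - s ^ 2 / (2 * R ^ 2) + 2 * μ * r0 / s := by
      intro s hs
      have hs0 : 0 < s := lt_trans hrh0 hs
      have hev : v =ᶠ[nhds s] fun t =>
          -2 * μ * t - (t ^ 3 - rh ^ 3) / (6 * R ^ 2) + 2 * μ * r0 * (Real.log t - Real.log rh) := by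
        refine Filter.eventuallyEq_of_mem (isOpen_Ioi.mem_nhds hs) ?_
        intro t ht
        rw [hg t ht, Real.log_div (ne_of_gt (lt_trans hrh0 ht)) hrh0.ne']
      rw [hev.deriv_eq]
      have h1 : HasDerivAt (fun t : ℝ => -2 * μ * t) (-2 * μ) s := by
        simpa using (hasDerivAt_id s).const_mul (-2 * μ)
      have h2 : HasDerivAt (fun t : ℝ => (t ^ 3 - rh ^ 3) / (6 * R ^ 2))
          (3 * s ^ 2 / (6 * R ^ 2)) s := by
        simpa using (((hasDerivAt_pow 3 s).sub_const (rh ^ 3)).div_const (6 * R ^ 2))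
      have h3 : HasDerivAt (fun t : ℝ => 2 * μ * r0 * (Real.log t - Real.log rh))
          (2 * μ * r0 * (1 / s)) s := by
        simpa using ((Real.hasDerivAt_log hs0.ne').sub_const (Real.log rh)).const_mul (2 * μ * r0)
      have hD : HasDerivAt (fun t : ℝ => -2 * μ * t - (t ^ 3 - rh ^ 3) / (6 * R ^ 2) + 2 * μ * r0 * (Real.log t - Real.log rh))
          (-2 * μ - 3 * s ^ 2 / (6 * R ^ 2) + 2 * μ * r0 * (1 / s)) s := (h1.sub h2).add h3
      rw [hD.deriv]
      field_simp
      ring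
    have hf : (fun s : ℝ => 2 * (deriv v s + s ^ 2 / (2 * R ^ 2)) * s)
        =ᶠ[nhds r] fun s => -4 * μ * s + 4 * μ * r0 := by
      refine Filter.eventuallyEq_of_mem (isOpen_Ioi.mem_nhds hgt) ?_
      intro s hs
      have hs0 : 0 < s := lt_trans hrh0 hs
      dsimp only
      rw [hdv s hs]
      field_simp
      ring
    rw [hf.deriv_eq]
    have hD : HasDerivAt (fun s : ℝ => -4 * μ * s + 4 * μ * r0) (-4 * μ) r := by
      simpa using ((hasDerivAt_id r).const_mul (-4 * μ)).add_const (4 * μ * r0)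
    rw [hD.deriv]
    -- right hand side: v r / r ≤ -2μ
    have hvr : v r = -2 * μ * r - (r ^ 3 - rh ^ 3) / (6 * R ^ 2) + 2 * μ * r0 * Real.log (r / rh) :=
      hg r hgt
    have hlog : Real.log (r / rh) ≤ r / rh - 1 := by
      have : 0 < r / rh := div_pos hr0' hrh0
      linarith [Real.log_le_sub_one_of_pos this]
    have hineq : v r ≤ -2 * μ * r := by
      rw [hvr]
      have h2 : 2 * μ * r0 * Real.log (r / rh) ≤ 2 * μ * r0 * (r / rh - 1) :=
        mul_le_mul_of_nonneg_left hlog (by positivity)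
      have h3 : 2 * μ * r0 * (r / rh - 1) ≤ (r ^ 3 - rh ^ 3) / (6 * R ^ 2) := by
        rw [hr0eq]
        have hstep : 2 * μ * (rh ^ 3 / (16 * μ * R ^ 2)) * (r / rh - 1)
            = rh ^ 2 * (r - rh) / (8 * R ^ 2) := by
          field_simp
          ring
        rw [hstep]
        rw [div_le_div_iff₀ (by positivity) (by positivity)]
        nlinarith [mul_nonneg (mul_nonneg (sub_nonneg.2 hgt.le)
          (by positivity : (0:ℝ) ≤ 8 * r ^ 2 + 8 * r * rh + 2 * rh ^ 2))
          (by positivity : (0:ℝ) ≤ R ^ 2)]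
      linarith
    have heta : v r / r ≤ -2 * μ := by
      rw [div_le_iff₀ hr0']
      linarith [hineq]
    rw [hW' (v r / r)]
    by_cases hc : -2 * μ ≤ v r / r
    · rw [if_pos hc]
      have : v r / r = -2 * μ := le_antisymm heta hc
      rw [this]; ring
    · rw [if_neg hc]
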